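/- Let D be an AV-domain whose integral closure in its quotient field is a DVR. Then D is quasilocal with maximal ideal M and the intersection of all powers M^n for n ≥ 1 is the zero ideal. -/

import Mathlib

/-- `D` is an almost valuation (AV-) domain: for all nonzero `a b : D` there is a positive
integer `n` with `a ^ n ∣ b ^ n` or `b ^ n ∣ a ^ n`. -/
def IsAVDomain (D : Type*) [CommRing D] : Prop :=
  ∀ a b : D, a ≠ 0 → b ≠ 0 → ∃ n : ℕ, 0 < n ∧ (a ^ n ∣ b ^ n ∨ b ^ n ∣ a ^ n)

/-- An integral element whose inverse is in the base ring lies in the base ring. -/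
lemma exists_algebraMap_eq_of_isIntegral_of_inv {R S : Type*} [CommRing R] [CommRing S]
    [Nontrivial S] [Algebra R S] {z : S} (hz : IsIntegral R z) {x : R}
    (h : z * algebraMap R S x = 1) : ∃ y : R, algebraMap R S y = z := by
  obtain ⟨p, pmonic, hp⟩ := hz
  have hp' : Polynomial.aeval z p = 0 := hp
  set w : S := algebraMap R S x with hw
  rcases Nat.eq_zero_or_pos p.natDegree with hm0 | hm1
  · exfalso
    rw [(Polynomial.Monic.natDegree_eq_zero pmonic).mp hm0] at hp'
    simp at hp'
  · set m := p.natDegree with hm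
    have hsum := Polynomial.aeval_eq_sum_range (S := S) (p := p) z
    rw [hp', Finset.sum_range_succ, pmonic.coeff_natDegree, one_smul] at hsum
    have hzm : z ^ m = -∑ i ∈ Finset.range m, algebraMap R S (p.coeff i) * z ^ i := by
      have h2 : z ^ m = -∑ i ∈ Finset.range m, p.coeff i • z ^ i :=
        eq_neg_of_add_eq_zero_right hsum.symm
      simp only [Algebra.smul_def] at h2
      exact h2
    have key1 : z ^ m * w ^ (m - 1) = z := by
      have hz1 : z ^ m = z * z ^ (m - 1) := by
        rw [← pow_succ']
        congr 1
        omega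
      rw [hz1, mul_assoc, ← mul_pow, h, one_pow, mul_one]
    refine ⟨-(∑ i ∈ Finset.range m, p.coeff i * x ^ (m - 1 - i)), ?_⟩
    rw [map_neg, map_sum]
    have hzeq : z = -∑ i ∈ Finset.range m, algebraMap R S (p.coeff i) * w ^ (m - 1 - i) := by
      calc z = z ^ m * w ^ (m - 1) := key1.symm
        _ = (-∑ i ∈ Finset.range m, algebraMap R S (p.coeff i) * z ^ i) * w ^ (m - 1) := by
              rw [hzm]
        _ = -∑ i ∈ Finset.range m,
              algebraMap R S (p.coeff i) * z ^ i * w ^ (m - 1) := by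
              rw [neg_mul, Finset.sum_mul]
        _ = -∑ i ∈ Finset.range m, algebraMap R S (p.coeff i) * w ^ (m - 1 - i) := by
              congr 1
              refine Finset.sum_congr rfl fun i hi => ?_
              have hi' : i < m := Finset.mem_range.mp hi
              have hsplit : w ^ (m - 1) = w ^ i * w ^ (m - 1 - i) := by
                rw [← pow_add]
                congr 1
                omega
              rw [mul_assoc, hsplit, ← mul_assoc (z ^ i), ← mul_pow, h, one_pow, one_mul]
    rw [hzeq]
    congr 1
    refine Finset.sum_congr rfl fun i hi => ?_
    rw [map_mul, map_pow]

set_option maxHeartbeats 1000000 in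
set_option synthInstance.maxHeartbeats 400000 in
/-- if `D` is an AV-domain whose integral closure in its quotient field is a
DVR, then `D` is quasilocal with maximal ideal `M` and `⋂_{n ≥ 1} M ^ n = 0`. -/
theorem stmt_19 (D K : Type*) [CommRing D] [IsDomain D] [Field K] [Algebra D K]
    [IsFractionRing D K] (hD : IsAVDomain D)
    (hDVR : IsDiscreteValuationRing (integralClosure D K)) :
    ∃ M : Ideal D, M.IsMaximal ∧ (∀ M' : Ideal D, M'.IsMaximal → M' = M) ∧
      (⨅ n : ℕ, M ^ (n + 1)) = ⊥ := by
  haveI := hDVR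
  -- D is local
  haveI hloc : IsLocalRing D := by
    refine IsLocalRing.of_nonunits_add ?_
    intro a b ha hb hab
    rcases eq_or_ne a 0 with rfl | ha0
    · rw [zero_add] at hab; exact hb hab
    rcases eq_or_ne b 0 with rfl | hb0
    · rw [add_zero] at hab; exact ha hab
    obtain ⟨n, hn, hdvd⟩ := hD a b ha0 hb0
    rcases hdvd with hd | hd
    · have h1 : a ∣ b ^ n := dvd_trans (dvd_pow_self a hn.ne') hd
      have h2 : a ∣ (a + b) ^ n - b ^ n := by
        have := sub_dvd_pow_sub_pow (a + b) b n
        simpa using this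
      have h3 : a ∣ (a + b) ^ n := by
        have := dvd_add h2 h1
        simpa using this
      exact ha (isUnit_of_dvd_unit h3 (hab.pow n))
    · have h1 : b ∣ a ^ n := dvd_trans (dvd_pow_self b hn.ne') hd
      have h2 : b ∣ (a + b) ^ n - a ^ n := by
        have := sub_dvd_pow_sub_pow (a + b) a n
        simpa using this
      have h3 : b ∣ (a + b) ^ n := by
        have := dvd_add h2 h1
        simpa using this
      exact hb (isUnit_of_dvd_unit h3 (hab.pow n))
  refine ⟨IsLocalRing.maximalIdeal D, IsLocalRing.maximalIdeal.isMaximal D,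
    fun M' hM' => IsLocalRing.eq_maximalIdeal hM', ?_⟩
  -- the embedding into the integral closure
  let e : D →+* integralClosure D K := algebraMap D (integralClosure D K)
  have ecoe : ∀ x : D, ((e x : integralClosure D K) : K) = algebraMap D K x := fun x => rfl
  have einj : Function.Injective e := by
    intro x y hxy
    have : algebraMap D K x = algebraMap D K y := by
      rw [← ecoe x, ← ecoe y, hxy]
    exact IsFractionRing.injective D K this
  -- nonunits of D map into the maximal ideal of the integral closure
  have hmap : ∀ x : D, x ∈ IsLocalRing.maximalIdeal D →
      e x ∈ IsLocalRing.maximalIdeal (integralClosure D K) := by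
    intro x hx
    rw [IsLocalRing.mem_maximalIdeal] at hx ⊢
    intro hu
    apply hx
    obtain ⟨u, hu'⟩ := hu
    set v : integralClosure D K := ((u⁻¹ : (integralClosure D K)ˣ) : integralClosure D K)
      with hv
    have hinv : v * e x = 1 := by
      rw [hv, ← hu']
      exact u.inv_mul
    have hinvK : v.1 * algebraMap D K x = 1 := by
      have := congrArg (Subtype.val) hinv
      simpa [ecoe x] using this
    have hint : IsIntegral D v.1 := (mem_integralClosure_iff D K).mp v.2
    obtain ⟨y, hy⟩ := exists_algebraMap_eq_of_isIntegral_of_inv hint hinvK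
    refine IsUnit.of_mul_eq_one (a := x) y ?_
    apply IsFractionRing.injective D K
    rw [map_mul, map_one, hy, mul_comm]
    exact hinvK
  -- Krull intersection in the integral closure
  haveI : IsNoetherianRing (integralClosure D K) := PrincipalIdealRing.isNoetherianRing
  have hKrull : (⨅ i : ℕ, (IsLocalRing.maximalIdeal (integralClosure D K)) ^ i) = ⊥ :=
    Ideal.iInf_pow_eq_bot_of_isDomain _ (Ideal.IsMaximal.ne_top inferInstance)
  rw [eq_bot_iff]
  intro x hx
  rw [Ideal.mem_iInf] at hx
  have hex : e x ∈ (⨅ i : ℕ, (IsLocalRing.maximalIdeal (integralClosure D K)) ^ i) := by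
    rw [Ideal.mem_iInf]
    intro i
    match i with
    | 0 => simp
    | (n + 1) =>
      have hle : Ideal.map e (IsLocalRing.maximalIdeal D) ≤
          IsLocalRing.maximalIdeal (integralClosure D K) := by
        rw [Ideal.map_le_iff_le_comap]
        intro y hy
        exact hmap y hy
      have hmem : e x ∈ Ideal.map e ((IsLocalRing.maximalIdeal D) ^ (n + 1)) :=
        Ideal.mem_map_of_mem e (hx n)
      rw [Ideal.map_pow] at hmem
      exact Ideal.pow_right_mono hle (n + 1) hmem
  rw [hKrull] at hex
  have h0 : e x = e 0 := by simpa using hex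
  simpa using einj h0
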